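/- Let p, q ∈ (0,1) with p ≠ q and π₁, π₂ > 0 with π₁ + π₂ = 1, and define Σ(q) = (π₁ p³ q(1−pq) + π₂ q⁴(1−q²)) / (π₁ p² + π₂ q²)² and G(q) = π₁ p/(q(1−pq)) + π₂/(1−q²). Then G(q)·Σ(q) = 1 if and only if q = (√(p²+4) − p)/2. -/

import Mathlib

theorem stmt_6 (p q π₁ π₂ : ℝ) (hp : p ∈ Set.Ioo (0:ℝ) 1) (hq : q ∈ Set.Ioo (0:ℝ) 1)
    (hpq : p ≠ q) (hπ₁ : 0 < π₁) (hπ₂ : 0 < π₂) (hπ : π₁ + π₂ = 1) :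
    (π₁ * p / (q * (1 - p*q)) + π₂ / (1 - q^2))
        * ((π₁ * p^3 * q * (1 - p*q) + π₂ * q^4 * (1 - q^2)) / (π₁ * p^2 + π₂ * q^2)^2) = 1
      ↔ q = (Real.sqrt (p^2 + 4) - p) / 2 := by
  obtain ⟨hp0, hp1⟩ := hp
  obtain ⟨hq0, hq1⟩ := hq
  have hpq1 : p * q < 1 := by nlinarith
  have h1 : 0 < q * (1 - p * q) := by nlinarith
  have h2 : (0:ℝ) < 1 - q ^ 2 := by nlinarith
  have h3 : (0:ℝ) < π₁ * p ^ 2 + π₂ * q ^ 2 := by positivity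
  have h1' : q * (1 - p * q) ≠ 0 := ne_of_gt h1
  have h2' : (1:ℝ) - q ^ 2 ≠ 0 := ne_of_gt h2
  have h3' : (π₁ * p ^ 2 + π₂ * q ^ 2) ^ 2 ≠ 0 := pow_ne_zero _ (ne_of_gt h3)
  have hs : q = (Real.sqrt (p ^ 2 + 4) - p) / 2 ↔ q ^ 2 + p * q - 1 = 0 := by
    constructor
    · intro h
      have h2qp : 2 * q + p = Real.sqrt (p ^ 2 + 4) := by rw [h]; ring
      have hsq : (2 * q + p) ^ 2 = p ^ 2 + 4 := by
        rw [h2qp, Real.sq_sqrt (by positivity)]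
      nlinarith
    · intro h
      have hsq : Real.sqrt (p ^ 2 + 4) = 2 * q + p := by
        rw [show p ^ 2 + 4 = (2 * q + p) ^ 2 by nlinarith]
        exact Real.sqrt_sq (by linarith)
      rw [hsq]; ring
  rw [hs]
  set D : ℝ := q * (1 - p * q) * (1 - q ^ 2) * (π₁ * p ^ 2 + π₂ * q ^ 2) ^ 2 with hD
  have hDpos : 0 < D := by positivity
  have key : ((π₁ * p / (q * (1 - p*q)) + π₂ / (1 - q^2))
        * ((π₁ * p^3 * q * (1 - p*q) + π₂ * q^4 * (1 - q^2)) / (π₁ * p^2 + π₂ * q^2)^2) - 1)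
      * D = π₁ * π₂ * p * q ^ 2 * ((p - q) * (1 - p * q - q ^ 2)) ^ 2 := by
    rw [hD]
    field_simp [hD, show (1:ℝ) - p * q ≠ 0 by linarith]
    ring
  constructor
  · intro h
    rw [h, sub_self, zero_mul] at key
    have hfac : ((p - q) * (1 - p * q - q ^ 2)) ^ 2 = 0 := by
      have hpos : (0:ℝ) < π₁ * π₂ * p * q ^ 2 := by positivity
      nlinarith [sq_nonneg ((p - q) * (1 - p * q - q ^ 2))]
    have := pow_eq_zero_iff (n := 2) (by norm_num) |>.mp hfac
    rcases mul_eq_zero.mp this with h' | h'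
    · exact absurd (by linarith : p = q) hpq
    · linarith
  · intro h
    have hz : (1:ℝ) - p * q - q ^ 2 = 0 := by linarith
    rw [hz] at key
    have : ((π₁ * p / (q * (1 - p*q)) + π₂ / (1 - q^2))
        * ((π₁ * p^3 * q * (1 - p*q) + π₂ * q^4 * (1 - q^2)) / (π₁ * p^2 + π₂ * q^2)^2) - 1)
        * D = 0 := by rw [key]; ring
    rcases mul_eq_zero.mp this with h' | h'
    · linarith
    · exact absurd h' (ne_of_gt hDpos)
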